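/- A C¹ curve u : ℝ/ℤ → ℝⁿ is embedded (injective) and regular (min_{ℝ/ℤ}|u'| > 0) if and only if bil(u) < ∞, where bil(u) = sup_{x≠y} |x−y|_{ℝ/ℤ}/|u(x)−u(y)|. -/

import Mathlib

open MeasureTheory Set Filter
open scoped RealInnerProductSpace ENNReal Topology

noncomputable section

/-- The distance on the circle `ℝ/ℤ` between the points represented by `x` and `y`. -/
def circDist (x y : ℝ) : ℝ := ‖((x - y : ℝ) : AddCircle (1 : ℝ))‖

/-- The representative of `z` modulo `1` lying in `(-1/2, 1/2]`. -/
def wrap (z : ℝ) : ℝ := 1 / 2 - Int.fract (1 / 2 - z)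

/-- Squared wedge norm `|a ∧ b|² = |a|²|b|² - ⟨a,b⟩²`. -/
def wedgeSq {n : ℕ} (a b : EuclideanSpace ℝ (Fin n)) : ℝ :=
  ‖a‖ ^ 2 * ‖b‖ ^ 2 - ⟪a, b⟫ ^ 2

/-- Wedge inner product `⟨a∧b, c∧d⟩ = ⟨a,c⟩⟨b,d⟩ - ⟨a,d⟩⟨b,c⟩`. -/
def wedgeInner {n : ℕ} (a b c d : EuclideanSpace ℝ (Fin n)) : ℝ :=
  ⟪a, c⟫ * ⟪b, d⟫ - ⟪a, d⟫ * ⟪b, c⟫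

/-- Fundamental domain for double integrals over `(ℝ/ℤ)²`. -/
def unitSq : Set (ℝ × ℝ) := Ioc (0 : ℝ) 1 ×ˢ Ioc (0 : ℝ) 1

/-- The tangent-point functional `TP` (extended-real-valued). -/
def TPe {n : ℕ} (q : ℝ) (u : ℝ → EuclideanSpace ℝ (Fin n)) : ℝ≥0∞ :=
  ENNReal.ofReal (1 / q) *
    ∫⁻ p in unitSq, ENNReal.ofReal
      (wedgeSq (deriv u p.2) (u p.1 - u p.2) ^ (q / 2) / ‖u p.1 - u p.2‖ ^ (2 * q))

/-- The tangent-point functional `TP` (real-valued). -/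
def TPr {n : ℕ} (q : ℝ) (u : ℝ → EuclideanSpace ℝ (Fin n)) : ℝ := (TPe q u).toReal

/-- The `q`-th power of the Sobolev–Slobodeckii seminorm `[f]_{W^{s,q}}` on `ℝ/ℤ`. -/
def sobSemPow {n : ℕ} (s q : ℝ) (f : ℝ → EuclideanSpace ℝ (Fin n)) : ℝ≥0∞ :=
  ∫⁻ p in unitSq, ENNReal.ofReal (‖f p.1 - f p.2‖ ^ q / circDist p.1 p.2 ^ (1 + s * q))

/-- The `W^{s,q}`-norm `‖f‖_{L^q} + [f]_{W^{s,q}}`. -/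
def Wnorm {n : ℕ} (s q : ℝ) (f : ℝ → EuclideanSpace ℝ (Fin n)) : ℝ :=
  (∫ x in Ioc (0 : ℝ) 1, ‖f x‖ ^ q) ^ (1 / q) + (sobSemPow s q f).toReal ^ (1 / q)

/-- The bi-Lipschitz constant `bil(u) = sup_{x ≢ y} |x-y|_{ℝ/ℤ}/|u(x)-u(y)|`. -/
def bil {n : ℕ} (u : ℝ → EuclideanSpace ℝ (Fin n)) : ℝ≥0∞ :=
  ⨆ (x : ℝ) (y : ℝ) (_ : circDist x y ≠ 0),
    ENNReal.ofReal (circDist x y) / ENNReal.ofReal ‖u x - u y‖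

/-- The `L^∞`-norm of the derivative of `u`. -/
def linfD {n : ℕ} (u : ℝ → EuclideanSpace ℝ (Fin n)) : ℝ≥0∞ :=
  ⨆ x : ℝ, (‖deriv u x‖₊ : ℝ≥0∞)

/-- A periodic curve is embedded if it is injective on the circle `ℝ/ℤ`. -/
def Embedded {n : ℕ} (u : ℝ → EuclideanSpace ℝ (Fin n)) : Prop :=
  ∀ x y : ℝ, u x = u y → ((x : AddCircle (1 : ℝ)) = (y : AddCircle (1 : ℝ)))

/-- A curve is regular if `min_{ℝ/ℤ} |u'| > 0`. -/
def Regular {n : ℕ} (u : ℝ → EuclideanSpace ℝ (Fin n)) : Prop :=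
  0 < ⨅ x : ℝ, ‖deriv u x‖

/-- Orthogonal projection of `b` onto the orthogonal complement of `ℝ a`. -/
def projPerp {n : ℕ} (a b : EuclideanSpace ℝ (Fin n)) : EuclideanSpace ℝ (Fin n) :=
  b - (⟪b, a⟫ / ‖a‖ ^ 2) • a

/-- The classical tangent-point functional (extended-real-valued). -/
def TPcle {n : ℕ} (q : ℝ) (u : ℝ → EuclideanSpace ℝ (Fin n)) : ℝ≥0∞ :=
  ENNReal.ofReal (1 / q) *
    ∫⁻ p in unitSq, ENNReal.ofReal
      (‖projPerp (deriv u p.2) (u p.1 - u p.2)‖ ^ q / ‖u p.1 - u p.2‖ ^ (2 * q) *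
        (‖deriv u p.1‖ * ‖deriv u p.2‖))

/-- The integrand of the functional `M(u; v, w)`. -/
def Mintegrand {n : ℕ} (q : ℝ) (u v w : ℝ → EuclideanSpace ℝ (Fin n)) (p : ℝ × ℝ) : ℝ :=
  wedgeSq (deriv u p.2) (u p.1 - u p.2) ^ ((q - 2) / 2) / ‖u p.1 - u p.2‖ ^ (2 * q) *
    wedgeInner (deriv u p.2) (u p.1 - u p.2) (deriv v p.2)
      (w p.1 - w p.2 - wrap (p.1 - p.2) • deriv w p.2)

/-- The functional `M(u; v, w)` appearing in the first variation of `TP`. -/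
def Mfun {n : ℕ} (q : ℝ) (u v w : ℝ → EuclideanSpace ℝ (Fin n)) : ℝ :=
  ∫ p in unitSq, Mintegrand q u v w p

/-- The integrand of the functional `A(u; v, w)`. -/
def Aintegrand {n : ℕ} (q : ℝ) (u v w : ℝ → EuclideanSpace ℝ (Fin n)) (p : ℝ × ℝ) : ℝ :=
  wedgeSq (deriv u p.2) (u p.1 - u p.2) ^ (q / 2) / ‖u p.1 - u p.2‖ ^ (2 * q + 2) *
    ⟪v p.1 - v p.2, w p.1 - w p.2⟫

/-- The functional `A(u; v, w)` appearing in the first variation of `TP`. -/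
def Afun {n : ℕ} (q : ℝ) (u v w : ℝ → EuclideanSpace ℝ (Fin n)) : ℝ :=
  ∫ p in unitSq, Aintegrand q u v w p

/-- The first variation `δTP(u)[w] = M(u;u,w) + M(u;w,u) - 2A(u;u,w)`. -/
def deltaTP {n : ℕ} (q : ℝ) (u w : ℝ → EuclideanSpace ℝ (Fin n)) : ℝ :=
  Mfun q u u w + Mfun q u w u - 2 * Afun q u u w

/-- The `H²` inner product on periodic curves. -/
def H2inner (v w : ℝ → EuclideanSpace ℝ (Fin 3)) : ℝ :=
  ∫ x in Ioc (0 : ℝ) 1,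
    (⟪v x, w x⟫ + ⟪deriv v x, deriv w x⟫ + ⟪deriv (deriv v) x, deriv (deriv w) x⟫)

/-- The total energy `E(u) = (κ/2)∫|u''|² + ρ TP(u)`. -/
def energyE (κ ρ q : ℝ) (u : ℝ → EuclideanSpace ℝ (Fin 3)) : ℝ :=
  κ / 2 * (∫ x in Ioc (0 : ℝ) 1, ‖deriv (deriv u) x‖ ^ 2) + ρ * TPr q u

lemma circDist_le_half (x y : ℝ) : circDist x y ≤ 1 / 2 := by
  have := AddCircle.norm_le_half_period (1:ℝ) (x := ((x - y : ℝ) : AddCircle (1:ℝ))) one_ne_zero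
  simpa [circDist] using this

lemma circDist_eq_abs {x y : ℝ} (h : |x - y| ≤ 1 / 2) : circDist x y = |x - y| :=
  (AddCircle.norm_coe_eq_abs_iff (1:ℝ) one_ne_zero).mpr (by simpa using h)

lemma circDist_nonneg (x y : ℝ) : 0 ≤ circDist x y := norm_nonneg _

lemma coe_sub_int (z : ℝ) (k : ℤ) : ((z - k : ℝ) : AddCircle (1 : ℝ)) = (z : AddCircle (1:ℝ)) := by
  have h0 : (((k : ℝ)) : AddCircle (1:ℝ)) = 0 := (AddCircle.coe_eq_zero_iff _).mpr ⟨k, by simp⟩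
  have : ((z - k : ℝ) : AddCircle (1:ℝ)) = (z : AddCircle (1:ℝ)) - (((k:ℝ)) : AddCircle (1:ℝ)) := rfl
  rw [this, h0, sub_zero]

lemma circDist_eq_zero_iff (x y : ℝ) :
    circDist x y = 0 ↔ (x : AddCircle (1:ℝ)) = (y : AddCircle (1:ℝ)) := by
  rw [circDist, norm_eq_zero]
  constructor
  · intro h; exact sub_eq_zero.mp h
  · intro h; show (x : AddCircle (1:ℝ)) - (y : AddCircle (1:ℝ)) = 0; rw [h, sub_self]


/-- Lemma 3.7, characterization of bi-Lipschitz curves: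
a `C¹` curve on `ℝ/ℤ` is embedded and regular if and only if `bil(u) < ∞`. -/
theorem embedded_regular_iff_bil_lt_top (n : ℕ)
    (u : ℝ → EuclideanSpace ℝ (Fin n))
    (hC1 : ContDiff ℝ 1 u) (hper : Function.Periodic u 1) :
    (Embedded u ∧ Regular u) ↔ bil u < ⊤ := by
  have hdiff : Differentiable ℝ u := hC1.differentiable one_ne_zero
  have hu' : Continuous (deriv u) := hC1.continuous_deriv le_rfl
  have hucont : Continuous u := hC1.continuous
  constructor
  · rintro ⟨hemb, hreg⟩
    set m := ⨅ x : ℝ, ‖deriv u x‖ with hmdef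
    have hm : 0 < m := hreg
    have hmle : ∀ x : ℝ, m ≤ ‖deriv u x‖ := fun x =>
      ciInf_le ⟨0, by rintro r ⟨t, rfl⟩; exact norm_nonneg _⟩ x
    -- uniform continuity of deriv u on [-1, 2]
    have huc := (isCompact_Icc (a := (-1:ℝ)) (b := 2)).uniformContinuousOn_of_continuous
      hu'.continuousOn
    rw [Metric.uniformContinuousOn_iff] at huc
    obtain ⟨δ₀, hδ₀, hδ⟩ := huc (m / 2) (half_pos hm)
    set δ : ℝ := min (δ₀ / 2) (1 / 2) with hδdef
    have hδpos : 0 < δ := lt_min (half_pos hδ₀) (by norm_num)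
    have hδhalf : δ ≤ 1 / 2 := min_le_right _ _
    have hδδ₀ : δ < δ₀ := lt_of_le_of_lt (min_le_left _ _) (by linarith)
    -- Claim A (one-sided)
    have claimA' : ∀ a b : ℝ, a ∈ Icc (-1:ℝ) 2 → b ∈ Icc (-1:ℝ) 2 → b ≤ a → a - b ≤ δ →
        m / 2 * (a - b) ≤ ‖u a - u b‖ := by
      intro a b haS hbS hba habδ
      set c := deriv u b with hcdef
      have hc : m ≤ ‖c‖ := hmle b
      have hcpos : 0 < ‖c‖ := lt_of_lt_of_le hm hc
      have hftc : ∫ t in Set.Ioc b a, deriv u t = u a - u b := by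
        rw [← intervalIntegral.integral_of_le hba]
        exact intervalIntegral.integral_deriv_eq_sub (fun t _ => hdiff t)
          (hu'.intervalIntegrable _ _)
      have hint : IntegrableOn (deriv u) (Set.Ioc b a) volume := hu'.integrableOn_Ioc
      have hswap : ∫ t in Set.Ioc b a, ⟪c, deriv u t⟫ = ⟪c, u a - u b⟫ := by
        rw [← hftc]; exact integral_inner hint c
      have hlow : ∀ t ∈ Set.Ioc b a, ‖c‖ * (m / 2) ≤ ⟪c, deriv u t⟫ := by
        intro t ht
        have ht1 := ht.1
        have ht2 := ht.2
        have htS : t ∈ Icc (-1:ℝ) 2 := ⟨by linarith [hbS.1], by linarith [haS.2]⟩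
        have hdist : dist t b < δ₀ := by
          rw [Real.dist_eq, abs_of_pos (by linarith)]
          linarith
        have hnd : ‖deriv u t - c‖ ≤ m / 2 := by
          have := hδ t htS b hbS hdist
          rw [dist_eq_norm] at this
          linarith
        have h1 : ⟪c, deriv u t⟫ = ⟪c, c⟫ + ⟪c, deriv u t - c⟫ := by
          rw [← inner_add_right]; congr 1; abel
        have h2 : |⟪c, deriv u t - c⟫| ≤ ‖c‖ * ‖deriv u t - c‖ := abs_real_inner_le_norm _ _
        have h3 : ⟪c, c⟫ = ‖c‖ ^ 2 := real_inner_self_eq_norm_sq c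
        have h4 : ‖c‖ * ‖deriv u t - c‖ ≤ ‖c‖ * (m / 2) :=
          mul_le_mul_of_nonneg_left hnd (norm_nonneg _)
        rw [h1, h3]
        have h5 : -(‖c‖ * (m / 2)) ≤ ⟪c, deriv u t - c⟫ := by
          have := abs_le.mp h2
          linarith [this.1]
        nlinarith [hc, hm.le, norm_nonneg c]
      have hci : IntegrableOn (fun t => ⟪c, deriv u t⟫) (Set.Ioc b a) volume :=
        (continuous_const.inner hu').integrableOn_Ioc
      have hmono : ‖c‖ * (m / 2) * (a - b) ≤ ∫ t in Set.Ioc b a, ⟪c, deriv u t⟫ := by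
        have h0 : ∫ _t in Set.Ioc b a, (‖c‖ * (m / 2)) ∂volume = ‖c‖ * (m / 2) * (a - b) := by
          rw [setIntegral_const, Real.volume_real_Ioc_of_le hba]
          rw [smul_eq_mul]; ring
        rw [← h0]
        exact setIntegral_mono_on (integrableOn_const measure_Ioc_lt_top.ne) hci
          measurableSet_Ioc hlow
      have hub : ⟪c, u a - u b⟫ ≤ ‖c‖ * ‖u a - u b‖ := real_inner_le_norm c _
      have hchain : ‖c‖ * (m / 2) * (a - b) ≤ ‖c‖ * ‖u a - u b‖ := by
        calc ‖c‖ * (m / 2) * (a - b) ≤ ∫ t in Set.Ioc b a, ⟪c, deriv u t⟫ := hmono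
          _ = ⟪c, u a - u b⟫ := hswap
          _ ≤ ‖c‖ * ‖u a - u b‖ := hub
      nlinarith [hcpos]
    have claimA : ∀ a b : ℝ, a ∈ Icc (-1:ℝ) 2 → b ∈ Icc (-1:ℝ) 2 → |a - b| ≤ δ →
        m / 2 * |a - b| ≤ ‖u a - u b‖ := by
      intro a b haS hbS habδ
      rcases le_total b a with h | h
      · rw [abs_of_nonneg (by linarith)] at habδ ⊢
        exact claimA' a b haS hbS h habδ
      · rw [abs_sub_comm] at habδ ⊢
        rw [norm_sub_rev]
        rw [abs_of_nonneg (by linarith)] at habδ ⊢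
        exact claimA' b a hbS haS h habδ
    -- Claim B : compact minimum away from diagonal
    set K : Set (ℝ × ℝ) :=
      {p : ℝ × ℝ | p.2 ∈ Icc (0:ℝ) 1 ∧ δ ≤ |p.1 - p.2| ∧ |p.1 - p.2| ≤ 1 / 2} with hKdef
    have hKclosed : IsClosed K := by
      have h1 : IsClosed {p : ℝ × ℝ | p.2 ∈ Icc (0:ℝ) 1} := isClosed_Icc.preimage continuous_snd
      have h2 : IsClosed {p : ℝ × ℝ | δ ≤ |p.1 - p.2|} :=
        isClosed_le continuous_const (continuous_fst.sub continuous_snd).abs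
      have h3 : IsClosed {p : ℝ × ℝ | |p.1 - p.2| ≤ 1 / 2} :=
        isClosed_le (continuous_fst.sub continuous_snd).abs continuous_const
      exact h1.inter (h2.inter h3)
    have hKsub : K ⊆ Icc (-1:ℝ) 2 ×ˢ Icc (0:ℝ) 1 := by
      rintro ⟨p1, p2⟩ ⟨hp2, _, hp3⟩
      have := abs_le.mp hp3
      exact ⟨⟨by simp only []; linarith [hp2.1, this.1], by simp only []; linarith [hp2.2, this.2]⟩, hp2⟩
    have hKc : IsCompact K :=
      ((isCompact_Icc.prod isCompact_Icc).of_isClosed_subset hKclosed hKsub)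
    have hKne : K.Nonempty := by
      refine ⟨(δ, 0), ?_⟩
      refine ⟨⟨le_refl 0, zero_le_one⟩, ?_, ?_⟩
      · rw [sub_zero, abs_of_pos hδpos]
      · rw [sub_zero, abs_of_pos hδpos]; linarith
    have hcontK : ContinuousOn (fun p : ℝ × ℝ => ‖u p.1 - u p.2‖) K :=
      (((hucont.comp continuous_fst).sub (hucont.comp continuous_snd)).norm).continuousOn
    obtain ⟨p₀, hp₀K, hp₀min⟩ := hKc.exists_isMinOn hKne hcontK
    set ε : ℝ := ‖u p₀.1 - u p₀.2‖ with hεdef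
    have hpos : ∀ p ∈ K, 0 < ‖u p.1 - u p.2‖ := by
      rintro ⟨p1, p2⟩ ⟨hp2, hp1, hp3⟩
      rcases (norm_nonneg (u p1 - u p2)).lt_or_eq with h | h
      · exact h
      · exfalso
        have hu0 : u p1 = u p2 := by
          have := (norm_eq_zero.mp h.symm); exact sub_eq_zero.mp this
        have hcoe := hemb p1 p2 hu0
        have hcd0 : circDist p1 p2 = 0 := (circDist_eq_zero_iff p1 p2).mpr hcoe
        rw [circDist_eq_abs hp3] at hcd0
        have : (0:ℝ) < |p1 - p2| := lt_of_lt_of_le hδpos hp1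
        linarith
    have hε : 0 < ε := hpos p₀ hp₀K
    have hεmin : ∀ p ∈ K, ε ≤ ‖u p.1 - u p.2‖ := fun p hp => hp₀min hp
    set C : ℝ := max (2 / m) (1 / (2 * ε)) with hCdef
    have hC0 : 0 ≤ C := le_trans (by positivity) (le_max_left _ _)
    -- main pointwise bound
    have hbound : ∀ x y : ℝ, circDist x y ≠ 0 → circDist x y ≤ C * ‖u x - u y‖ := by
      intro x y hxy
      set a : ℝ := x - round (x - y) - ⌊y⌋ with hadef
      set b : ℝ := y - ⌊y⌋ with hbdef
      have hab : a - b = x - y - round (x - y) := by rw [hadef, hbdef]; ring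
      have hua : u a = u x := by
        have h := hper.sub_int_mul_eq (x := x) (round (x - y) + ⌊y⌋)
        have : a = x - ((round (x - y) + ⌊y⌋ : ℤ) : ℝ) * 1 := by push_cast; ring
        rw [this]; exact h
      have hub' : u b = u y := by
        have h := hper.sub_int_mul_eq (x := y) ⌊y⌋
        have : b = y - ((⌊y⌋ : ℤ) : ℝ) * 1 := by push_cast; ring
        rw [this]; exact h
      have hb01 : b ∈ Icc (0:ℝ) 1 := by
        constructor
        · have := Int.fract_nonneg y; rwa [Int.fract] at this
        · have := (Int.fract_lt_one y).le; rwa [Int.fract] at this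
      have habs : |a - b| ≤ 1 / 2 := by rw [hab]; exact abs_sub_round (x - y)
      have hcd : circDist x y = |a - b| := by
        have h1 : circDist a b = |a - b| := circDist_eq_abs habs
        have h2 : circDist a b = circDist x y := by
          unfold circDist
          congr 1
          rw [hab, coe_sub_int]
        rw [← h2, h1]
      have habne : (0:ℝ) < |a - b| := by
        rcases (abs_nonneg (a - b)).lt_or_eq with h | h
        · exact h
        · exact absurd (hcd.trans h.symm) hxy
      rw [hcd, ← hua, ← hub']
      rcases le_or_gt |a - b| δ with hcase | hcase
      · -- near-diagonal
        have habl := abs_le.mp habs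
        have hbS : b ∈ Icc (-1:ℝ) 2 := ⟨by linarith [hb01.1], by linarith [hb01.2]⟩
        have haS : a ∈ Icc (-1:ℝ) 2 :=
          ⟨by linarith [hb01.1, habl.1], by linarith [hb01.2, habl.2]⟩
        have hA := claimA a b haS hbS hcase
        have h2m : |a - b| ≤ 2 / m * ‖u a - u b‖ := by
          rw [div_mul_eq_mul_div, le_div_iff₀ hm]
          nlinarith
        calc |a - b| ≤ 2 / m * ‖u a - u b‖ := h2m
          _ ≤ C * ‖u a - u b‖ :=
            mul_le_mul_of_nonneg_right (le_max_left _ _) (norm_nonneg _)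
      · -- far from diagonal
        have hK : (a, b) ∈ K := ⟨hb01, hcase.le, habs⟩
        have hεle := hεmin (a, b) hK
        simp only [] at hεle
        have : |a - b| ≤ 1 / (2 * ε) * ‖u a - u b‖ := by
          rw [div_mul_eq_mul_div, le_div_iff₀ (by positivity)]
          calc |a - b| * (2 * ε) ≤ (1/2) * (2 * ε) := by
                apply mul_le_mul_of_nonneg_right habs (by positivity)
            _ = ε := by ring
            _ ≤ ‖u a - u b‖ := hεle
            _ ≤ 1 * ‖u a - u b‖ := by rw [one_mul]
        calc |a - b| ≤ 1 / (2 * ε) * ‖u a - u b‖ := this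
          _ ≤ C * ‖u a - u b‖ :=
            mul_le_mul_of_nonneg_right (le_max_right _ _) (norm_nonneg _)
    -- conclude bil u ≤ ofReal C
    have hbil : bil u ≤ ENNReal.ofReal C := by
      refine iSup_le fun x => iSup_le fun y => iSup_le fun hxy => ?_
      have hb := hbound x y hxy
      have hcdpos : 0 < circDist x y := lt_of_le_of_ne (circDist_nonneg x y) (Ne.symm hxy)
      have hs : 0 < ‖u x - u y‖ := by
        rcases (norm_nonneg (u x - u y)).lt_or_eq with h | h
        · exact h
        · exfalso; rw [← h, mul_zero] at hb; linarith
      rw [ENNReal.div_le_iff (ENNReal.ofReal_pos.mpr hs).ne' ENNReal.ofReal_ne_top]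
      rw [← ENNReal.ofReal_mul hC0]
      exact ENNReal.ofReal_le_ofReal hb
    exact lt_of_le_of_lt hbil ENNReal.ofReal_lt_top
  · intro hb
    have key : ∀ x y : ℝ, circDist x y ≠ 0 →
        circDist x y ≤ (bil u).toReal * ‖u x - u y‖ ∧ 0 < ‖u x - u y‖ := by
      intro x y hxy
      have hle : ENNReal.ofReal (circDist x y) / ENNReal.ofReal ‖u x - u y‖ ≤ bil u :=
        le_iSup_of_le x (le_iSup_of_le y (le_iSup_of_le hxy le_rfl))
      have hcd : 0 < circDist x y := lt_of_le_of_ne (circDist_nonneg x y) (Ne.symm hxy)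
      have hs : 0 < ‖u x - u y‖ := by
        rcases (norm_nonneg (u x - u y)).lt_or_eq with h | h
        · exact h
        · exfalso
          rw [← h, ENNReal.ofReal_zero, ENNReal.div_zero (ENNReal.ofReal_pos.mpr hcd).ne'] at hle
          exact absurd (lt_of_le_of_lt hle hb) (lt_irrefl _)
      refine ⟨?_, hs⟩
      have h2 := (ENNReal.div_le_iff (ENNReal.ofReal_pos.mpr hs).ne'
        ENNReal.ofReal_ne_top).mp hle
      have hfin : bil u * ENNReal.ofReal ‖u x - u y‖ ≠ ⊤ :=
        ENNReal.mul_ne_top hb.ne ENNReal.ofReal_ne_top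
      calc circDist x y = (ENNReal.ofReal (circDist x y)).toReal :=
            (ENNReal.toReal_ofReal hcd.le).symm
        _ ≤ (bil u * ENNReal.ofReal ‖u x - u y‖).toReal := ENNReal.toReal_mono hfin h2
        _ = (bil u).toReal * ‖u x - u y‖ := by
            rw [ENNReal.toReal_mul, ENNReal.toReal_ofReal hs.le]
    constructor
    · intro x y huv
      by_contra hne
      have hxy : circDist x y ≠ 0 := fun h => hne ((circDist_eq_zero_iff x y).mp h)
      have := (key x y hxy).2
      rw [huv, sub_self, norm_zero] at this
      exact lt_irrefl 0 this
    · set B : ℝ := (bil u).toReal with hBdef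
      have hq : circDist (1/4 : ℝ) 0 = 1/4 := by
        rw [circDist_eq_abs (by rw [sub_zero, abs_of_pos] <;> norm_num)]
        rw [sub_zero, abs_of_pos] <;> norm_num
      have hk := key (1/4) 0 (by rw [hq]; norm_num)
      have hB : 0 < B := by
        rcases hk with ⟨h1, h2⟩
        rw [hq] at h1
        nlinarith [norm_nonneg (u (1/4) - u 0)]
      have hbd : ∀ x : ℝ, 1 / B ≤ ‖deriv u x‖ := by
        intro x
        have hd : HasDerivAt u (deriv u x) x := (hC1.differentiable one_ne_zero x).hasDerivAt
        have hslope := hasDerivAt_iff_tendsto_slope.mp hd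
        have hmono : (𝓝[>] x) ≤ (𝓝[≠] x) :=
          nhdsWithin_mono x fun y hy => ne_of_gt hy
        have htends : Tendsto (fun y => ‖slope u x y‖) (𝓝[>] x) (𝓝 ‖deriv u x‖) :=
          (continuous_norm.tendsto _).comp (hslope.mono_left hmono)
        refine ge_of_tendsto htends ?_
        filter_upwards [Ioo_mem_nhdsGT_of_mem (show x ∈ Set.Ico x (x + 1/2) from ⟨le_refl x, by linarith⟩)] with y hy
        obtain ⟨hy1, hy2⟩ := hy
        have hyx : 0 < y - x := by linarith
        have hcdyx : circDist y x = y - x := by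
          rw [circDist_eq_abs (by rw [abs_of_pos hyx]; linarith)]
          rw [abs_of_pos hyx]
        have hne : circDist y x ≠ 0 := by rw [hcdyx]; linarith
        obtain ⟨h1, h2⟩ := key y x hne
        rw [hcdyx] at h1
        have hsl : ‖slope u x y‖ = (y - x)⁻¹ * ‖u y - u x‖ := by
          rw [slope_def_module, norm_smul, Real.norm_eq_abs, abs_of_pos (inv_pos.mpr hyx)]
        rw [hsl]
        calc 1 / B = (y - x)⁻¹ * ((y - x) / B) := by field_simp
          _ ≤ (y - x)⁻¹ * ‖u y - u x‖ := by
              apply mul_le_mul_of_nonneg_left _ (inv_nonneg.mpr hyx.le)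
              rw [div_le_iff₀ hB]; linarith
      have : (0:ℝ) < 1 / B := by positivity
      exact lt_of_lt_of_le this (le_ciInf hbd)
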